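/- Let θ₁, θ₂ ∈ ℝ and let x₁, x₂, x₃ : ℝ → ℝ satisfy x₁'(t) = θ₁·x₂(t), x₂'(t) = −θ₁·x₁(t), and x₃'(t) = θ₁·θ₂ for all t ∈ ℝ, and define the output y(t) = x₁(t) + x₃(t). Then y is four times differentiable and for all t, the second iterated derivative of y satisfies y''(t) = −θ₁²·x₁(t), and the fourth iterated derivative satisfies y⁽⁴⁾(t) = −θ₁²·y''(t). -/
import Mathlib


/-- For model M_{3.4} with output y = x₁ + x₃: y is four times differentiable,
y''(t) = −θ₁²·x₁(t), and y⁽⁴⁾(t) = −θ₁²·y''(t). -/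
theorem stmt_5 (θ₁ θ₂ : ℝ) (x₁ x₂ x₃ : ℝ → ℝ)
    (h₁ : ∀ t : ℝ, HasDerivAt x₁ (θ₁ * x₂ t) t)
    (h₂ : ∀ t : ℝ, HasDerivAt x₂ (-θ₁ * x₁ t) t)
    (h₃ : ∀ t : ℝ, HasDerivAt x₃ (θ₁ * θ₂) t)
    (y : ℝ → ℝ) (hy : ∀ t : ℝ, y t = x₁ t + x₃ t) :
    (Differentiable ℝ y ∧ Differentiable ℝ (deriv y) ∧
      Differentiable ℝ (deriv (deriv y)) ∧
      Differentiable ℝ (deriv (deriv (deriv y)))) ∧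
    (∀ t : ℝ, iteratedDeriv 2 y t = -θ₁ ^ 2 * x₁ t) ∧
    (∀ t : ℝ, iteratedDeriv 4 y t = -θ₁ ^ 2 * iteratedDeriv 2 y t) := by
  have hyf : y = fun t => x₁ t + x₃ t := funext hy
  have hdy : ∀ t, HasDerivAt y (θ₁ * x₂ t + θ₁ * θ₂) t := by
    intro t; rw [hyf]; exact (h₁ t).add (h₃ t)
  have hd1 : deriv y = fun t => θ₁ * x₂ t + θ₁ * θ₂ := funext fun t => (hdy t).deriv
  have hdy2 : ∀ t, HasDerivAt (deriv y) (θ₁ * (-θ₁ * x₁ t)) t := by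
    intro t; rw [hd1]; exact (((h₂ t).const_mul θ₁).add_const _)
  have hd2 : deriv (deriv y) = fun t => θ₁ * (-θ₁ * x₁ t) := funext fun t => (hdy2 t).deriv
  have hdy3 : ∀ t, HasDerivAt (deriv (deriv y)) (θ₁ * (-θ₁ * (θ₁ * x₂ t))) t := by
    intro t; rw [hd2]; exact ((h₁ t).const_mul (-θ₁)).const_mul θ₁
  have hd3 : deriv (deriv (deriv y)) = fun t => θ₁ * (-θ₁ * (θ₁ * x₂ t)) :=
    funext fun t => (hdy3 t).deriv
  have hdy4 : ∀ t, HasDerivAt (deriv (deriv (deriv y))) (θ₁ * (-θ₁ * (θ₁ * (-θ₁ * x₁ t)))) t := by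
    intro t; rw [hd3]; exact (((h₂ t).const_mul θ₁).const_mul (-θ₁)).const_mul θ₁
  have hi2 : ∀ t, iteratedDeriv 2 y t = -θ₁ ^ 2 * x₁ t := by
    intro t
    simp only [iteratedDeriv_succ, iteratedDeriv_zero, hd2]
    ring
  refine ⟨⟨fun t => (hdy t).differentiableAt, fun t => (hdy2 t).differentiableAt,
    fun t => (hdy3 t).differentiableAt, fun t => (hdy4 t).differentiableAt⟩, hi2, ?_⟩
  intro t
  have hd4 : deriv (deriv (deriv (deriv y))) t = θ₁ * (-θ₁ * (θ₁ * (-θ₁ * x₁ t))) :=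
    (hdy4 t).deriv
  simp only [iteratedDeriv_succ, iteratedDeriv_zero]
  rw [hd4, hd2]
  ring
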